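/- Let A, B be strings of lengths m and n, σ a character, K' the all scores matrix of σA and B, and Diff = K' − K. Assume every row of K□ contains at most one nonzero entry and every nonzero entry of K□ equals 1. Then for all 0 ≤ i < j ≤ n, the pair (i,j) is a step index of Diff (i.e., Diff[i,j] ≠ Diff[i,j−1]) if and only if k = nextmatch(i,σ,B) < ∞, every row i' with i+1 ≤ i' ≤ k of K□ contains a pivotal point, and j = max{ j' : there exists i' with i+1 ≤ i' ≤ k and K□[i',j'] ≠ 0 } (the maximum column index among all pivotal points of K□ in rows i+1,…,k). -/

import Mathlib

variable {α : Type*}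

/-- LCS of two lists: the maximum length of a common sublist. -/
noncomputable def LCS (X Y : List α) : ℕ :=
  sSup {k | ∃ Z : List α, Z.length = k ∧ Z.Sublist X ∧ Z.Sublist Y}

/-- `substr S i j` is S[i..j]: the characters of S at (1-based) positions i+1,…,j. -/
def substr (S : List α) (i j : ℕ) : List α := (S.take j).drop i

/-- The density matrix D□ of a matrix D. -/
def density (D : ℕ → ℕ → ℤ) (i j : ℕ) : ℤ :=
  D i j + D (i - 1) (j - 1) - D (i - 1) j - D i (j - 1)

/-- The all scores matrix K of A and B: K[i,j] = LCS(B[i..j], A) if i ≤ j, else j - i. -/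
noncomputable def Kmat (A B : List α) (i j : ℕ) : ℤ :=
  if i ≤ j then (LCS (substr B i j) A : ℤ) else (j : ℤ) - (i : ℤ)

/-- The all scores matrix P of A and B: P[i,j] = LCS(B[i..n], A[0..j]). -/
noncomputable def Pmat (A B : List α) (i j : ℕ) : ℤ :=
  (LCS (substr B i B.length) (substr A 0 j) : ℤ)

/-- nextmatch(i,σ,B): minimum (1-based) position i' with i < i' ≤ |B| and B[i'] = σ; ⊤ (∞) if none. -/
noncomputable def nextmatch (i : ℕ) (σ : α) (B : List α) : ℕ∞ :=
  sInf {k : ℕ∞ | ∃ k' : ℕ, k = (k' : ℕ∞) ∧ i < k' ∧ k' ≤ B.length ∧ B[k' - 1]? = some σ}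

/-- prevmatch(j,σ,B): maximum (1-based) position i' with 1 ≤ i' ≤ j and B[i'] = σ; ⊥ (−∞) if none. -/
noncomputable def prevmatch (j : ℕ) (σ : α) (B : List α) : WithBot ℕ :=
  sSup {k : WithBot ℕ | ∃ k' : ℕ, k = (k' : WithBot ℕ) ∧ 1 ≤ k' ∧ k' ≤ j ∧ B[k' - 1]? = some σ}

section Aux

open Finset

/-! ### LCS basics -/

lemma lcs_bdd (X Y : List α) :
    BddAbove {k | ∃ Z : List α, Z.length = k ∧ Z.Sublist X ∧ Z.Sublist Y} := by
  refine ⟨X.length, fun k hk => ?_⟩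
  obtain ⟨Z, hl, hX, _⟩ := hk
  exact hl ▸ hX.length_le

lemma lcs_ne (X Y : List α) :
    {k | ∃ Z : List α, Z.length = k ∧ Z.Sublist X ∧ Z.Sublist Y}.Nonempty :=
  ⟨0, [], rfl, List.nil_sublist _, List.nil_sublist _⟩

lemma le_lcs {X Y Z : List α} (hX : Z.Sublist X) (hY : Z.Sublist Y) : Z.length ≤ LCS X Y :=
  le_csSup (lcs_bdd X Y) ⟨Z, rfl, hX, hY⟩

lemma lcs_exists (X Y : List α) : ∃ Z : List α, Z.length = LCS X Y ∧ Z.Sublist X ∧ Z.Sublist Y :=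
  Nat.sSup_mem (lcs_ne X Y) (lcs_bdd X Y)

lemma lcs_nil (Y : List α) : LCS ([] : List α) Y = 0 := by
  obtain ⟨Z, hl, hX, _⟩ := lcs_exists ([] : List α) Y
  rw [← hl, List.sublist_nil.1 hX]; rfl

lemma lcs_le {X Y : List α} {k : ℕ}
    (h : ∀ Z : List α, Z.Sublist X → Z.Sublist Y → Z.length ≤ k) : LCS X Y ≤ k := by
  obtain ⟨Z, hl, hX, hY⟩ := lcs_exists X Y
  exact hl ▸ h Z hX hY

lemma lcs_cons_right_of_not_mem {X A : List α} {σ : α} (h : σ ∉ X) :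
    LCS X (σ :: A) = LCS X A := by
  apply le_antisymm
  · refine lcs_le fun Z hX hY => ?_
    rcases List.sublist_cons_iff.1 hY with hY | ⟨r, rfl, hr⟩
    · exact le_lcs hX hY
    · exact absurd (hX.mem List.mem_cons_self) h
  · exact lcs_le fun Z hX hY => le_lcs hX (hY.trans (List.sublist_cons_self _ _))

lemma sublist_tail_of_first {σ : α} {Z U V : List α} (hU : σ ∉ U)
    (h : (σ :: Z).Sublist (U ++ σ :: V)) : Z.Sublist V := by
  induction U with
  | nil =>
    simp only [List.nil_append] at h
    rcases List.sublist_cons_iff.1 h with h | ⟨r, hr, h⟩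
    · exact ((List.sublist_cons_self σ Z).trans h)
    · cases hr; exact h
  | cons u U ih =>
    simp only [List.cons_append] at h
    rcases List.sublist_cons_iff.1 h with h | ⟨r, hr, h⟩
    · exact ih (fun hm => hU (List.mem_cons_of_mem _ hm)) h
    · cases hr
      exact absurd List.mem_cons_self hU

lemma lcs_cons_split {A U V : List α} {σ : α} (hU : σ ∉ U) :
    LCS (U ++ σ :: V) (σ :: A) = max (LCS (U ++ σ :: V) A) (1 + LCS V A) := by
  apply le_antisymm
  · refine lcs_le fun Z hX hY => ?_
    rcases List.sublist_cons_iff.1 hY with hY | ⟨r, rfl, hr⟩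
    · exact le_max_of_le_left (le_lcs hX hY)
    · refine le_max_of_le_right ?_
      have h3 := le_lcs (sublist_tail_of_first hU hX) hr
      simp only [List.length_cons]
      omega
  · refine max_le ?_ ?_
    · exact lcs_le fun Z hX hY => le_lcs hX (hY.trans (List.sublist_cons_self _ _))
    · obtain ⟨Z, hl, hV, hA⟩ := lcs_exists V A
      have h1 : (σ :: Z).Sublist (U ++ σ :: V) :=
        (List.cons_sublist_cons.2 hV).trans (List.sublist_append_right U _)
      have h2 : (σ :: Z).Sublist (σ :: A) := List.cons_sublist_cons.2 hA
      have := le_lcs h1 h2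
      simp only [List.length_cons, hl] at this
      omega

/-! ### substr basics -/

lemma substr_nil (S : List α) {i j : ℕ} (h : j ≤ i) : substr S i j = [] := by
  apply List.drop_eq_nil_of_le
  simp only [List.length_take]
  omega

lemma substr_append (S : List α) {i k j : ℕ} (hik : i ≤ k) (hkj : k ≤ j) :
    substr S i j = substr S i k ++ substr S k j := by
  unfold substr
  have h1 : S.take k = (S.take j).take k := by rw [List.take_take, min_eq_left hkj]
  rw [h1]
  set L := S.take j with hL
  conv_lhs => rw [← List.take_append_drop k L]
  rw [List.drop_append]
  congr 1
  by_cases h : L.length ≤ k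
  · rw [List.drop_eq_nil_of_le h]; simp
  · rw [List.length_take, min_eq_left (le_of_not_ge h), Nat.sub_eq_zero_of_le hik,
      List.drop_zero]

lemma substr_singleton {S : List α} {σ : α} {k : ℕ} (hk : 1 ≤ k) (hkn : k ≤ S.length)
    (h : S[k-1]? = some σ) : substr S (k-1) k = [σ] := by
  unfold substr
  have h2 : k - 1 + 1 = k := by omega
  rw [← h2, List.take_succ, h2, h, List.drop_append]
  have h3 : (S.take (k-1)).length = k - 1 := by
    rw [List.length_take]; omega
  rw [List.drop_eq_nil_of_le (le_of_eq h3), h3, Nat.sub_self, List.drop_zero]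
  rfl

lemma not_mem_substr {S : List α} {σ : α} {i j : ℕ}
    (h : ∀ p, i < p → p ≤ j → S[p-1]? ≠ some σ) : σ ∉ substr S i j := by
  intro hm
  rw [List.mem_iff_getElem] at hm
  obtain ⟨t, ht, hget⟩ := hm
  have hlen := ht
  simp only [substr, List.length_drop, List.length_take] at hlen
  simp only [substr, List.getElem_drop, List.getElem_take] at hget
  refine h (i+t+1) (by omega) (by omega) ?_
  have hS : i + t < S.length := by omega
  rw [show i+t+1-1 = i+t by omega, List.getElem?_eq_getElem hS, hget]

/-! ### Kmat basics -/

lemma Kmat_diag (A B : List α) (i : ℕ) : Kmat A B i i = 0 := by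
  rw [Kmat, if_pos le_rfl, substr_nil _ le_rfl, lcs_nil]
  rfl

lemma Kmat_lower (A B : List α) {i j : ℕ} (h : j < i) :
    Kmat A B i j = (j : ℤ) - (i : ℤ) := if_neg (by omega)

lemma Kmat_cons_no_match {A B : List α} {σ : α} {i j : ℕ} (hij : i ≤ j)
    (h : ∀ p, i < p → p ≤ j → B[p-1]? ≠ some σ) :
    Kmat (σ :: A) B i j = Kmat A B i j := by
  simp only [Kmat, if_pos hij]
  rw [lcs_cons_right_of_not_mem (not_mem_substr h)]

lemma Kmat_cons_match {A B : List α} {σ : α} {i k j : ℕ} (hik : i < k) (hkj : k ≤ j)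
    (hkn : k ≤ B.length) (hmatch : B[k-1]? = some σ)
    (hmin : ∀ p, i < p → p < k → B[p-1]? ≠ some σ) :
    Kmat (σ :: A) B i j = max (Kmat A B i j) (1 + Kmat A B k j) := by
  have hij : i ≤ j := le_of_lt (lt_of_lt_of_le hik hkj)
  have hdec : substr B i j = substr B i (k-1) ++ (σ :: substr B k j) := by
    rw [substr_append B (show i ≤ k-1 by omega) (show k-1 ≤ j by omega),
      substr_append B (show k-1 ≤ k by omega) hkj,
      substr_singleton (by omega) hkn hmatch]
    simp
  have hU : σ ∉ substr B i (k-1) :=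
    not_mem_substr (fun p hp1 hp2 => hmin p hp1 (by omega))
  simp only [Kmat, if_pos hij, if_pos hkj]
  rw [hdec, lcs_cons_split hU]
  push_cast [Nat.cast_max]
  ring

/-! ### nextmatch -/

lemma nextmatch_eq_top {B : List α} {σ : α} {i : ℕ}
    (h : ∀ k', i < k' → k' ≤ B.length → B[k'-1]? ≠ some σ) :
    nextmatch i σ B = ⊤ := by
  have he : {k : ℕ∞ | ∃ k' : ℕ, k = (k' : ℕ∞) ∧ i < k' ∧ k' ≤ B.length ∧
      B[k' - 1]? = some σ} = ∅ := by
    ext x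
    simp only [Set.mem_setOf_eq, Set.mem_empty_iff_false, iff_false]
    rintro ⟨k', rfl, h1, h2, h3⟩
    exact h k' h1 h2 h3
  rw [nextmatch, he, sInf_empty]

lemma nextmatch_eq_coe {B : List α} {σ : α} {i k : ℕ} (h1 : i < k) (h2 : k ≤ B.length)
    (h3 : B[k-1]? = some σ)
    (hmin : ∀ k', i < k' → k' ≤ B.length → B[k'-1]? = some σ → k ≤ k') :
    nextmatch i σ B = (k : ℕ∞) := by
  apply le_antisymm
  · exact sInf_le ⟨k, rfl, h1, h2, h3⟩
  · apply le_sInf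
    rintro x ⟨k', rfl, h1', h2', h3'⟩
    exact_mod_cast hmin k' h1' h2' h3'

/-! ### summation -/

lemma telescope (f : ℕ → ℤ) {a b : ℕ} (h : a ≤ b) :
    ∑ x ∈ Finset.Ioc a b, (f x - f (x-1)) = f b - f a := by
  induction b, h using Nat.le_induction with
  | base => simp
  | succ b hb ih =>
    rw [Finset.sum_Ioc_succ_top hb, ih]
    simp only [Nat.add_sub_cancel]
    ring

lemma density_sum (D : ℕ → ℕ → ℤ) {i k j : ℕ} (hik : i ≤ k) (hij : i ≤ j) :
    ∑ i' ∈ Finset.Ioc i k, ∑ j' ∈ Finset.Ioc i j, density D i' j'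
      = (D k j - D i j) - (D k i - D i i) := by
  have inner : ∀ i', ∑ j' ∈ Finset.Ioc i j, density D i' j'
      = (D i' j - D (i'-1) j) - (D i' i - D (i'-1) i) := by
    intro i'
    have h := telescope (fun t => D i' t - D (i'-1) t) hij
    rw [← h]
    refine Finset.sum_congr rfl fun x _ => ?_
    simp only [density]
    ring
  calc ∑ i' ∈ Finset.Ioc i k, ∑ j' ∈ Finset.Ioc i j, density D i' j'
      = ∑ i' ∈ Finset.Ioc i k,
          ((fun t => D t j - D t i) i' - (fun t => D t j - D t i) (i'-1)) := by
        refine Finset.sum_congr rfl fun x _ => ?_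
        rw [inner]
        ring
    _ = (D k j - D k i) - (D i j - D i i) := telescope _ hik
    _ = _ := by ring

lemma row_sum_eq_one {n : ℕ} {D : ℕ → ℕ → ℤ}
    (hRow : ∀ i, 1 ≤ i → i ≤ n → ∀ j₁ j₂, 1 ≤ j₁ → j₁ ≤ n → 1 ≤ j₂ → j₂ ≤ n →
      density D i j₁ ≠ 0 → density D i j₂ ≠ 0 → j₁ = j₂)
    (hVal : ∀ i, 1 ≤ i → i ≤ n → ∀ j, 1 ≤ j → j ≤ n → density D i j ≠ 0 → density D i j = 1)
    {i' a b : ℕ} (h1 : 1 ≤ i') (h2 : i' ≤ n) (hb : b ≤ n)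
    (hex : ∃ j' ∈ Finset.Ioc a b, density D i' j' ≠ 0) :
    ∑ j' ∈ Finset.Ioc a b, density D i' j' = 1 := by
  obtain ⟨j₀, hm, hne⟩ := hex
  have hm' := Finset.mem_Ioc.1 hm
  rw [Finset.sum_eq_single_of_mem j₀ hm]
  · exact hVal i' h1 h2 j₀ (by omega) (by omega) hne
  · intro c hc hcne
    have hc' := Finset.mem_Ioc.1 hc
    by_contra hc0
    exact hcne (hRow i' h1 h2 c j₀ (by omega) (by omega) (by omega) (by omega) hc0 hne)

lemma row_sum_eq_zero {D : ℕ → ℕ → ℤ} {i' a b : ℕ}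
    (hex : ¬ ∃ j' ∈ Finset.Ioc a b, density D i' j' ≠ 0) :
    ∑ j' ∈ Finset.Ioc a b, density D i' j' = 0 := by
  push_neg at hex
  exact Finset.sum_eq_zero fun x hx => hex x hx

lemma density_ne_col_ge {A B : List α} {i' j' : ℕ} (h1 : 1 ≤ i') (h2 : 1 ≤ j')
    (h : density (Kmat A B) i' j' ≠ 0) : i' ≤ j' := by
  by_contra hlt
  push_neg at hlt
  apply h
  have e1 : Kmat A B i' j' = (j' : ℤ) - i' := if_neg (by omega)
  have e2 : Kmat A B (i'-1) (j'-1) = ((j'-1 : ℕ) : ℤ) - ((i'-1:ℕ):ℤ) := if_neg (by omega)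
  have e4 : Kmat A B i' (j'-1) = ((j'-1:ℕ):ℤ) - (i':ℤ) := if_neg (by omega)
  have e3 : Kmat A B (i'-1) j' = (j' : ℤ) - ((i'-1:ℕ):ℤ) := by
    rcases Nat.lt_or_ge j' (i'-1) with hc | hc
    · exact if_neg (by omega)
    · have hEq : i' - 1 = j' := by omega
      rw [Kmat, if_pos (by omega), hEq, substr_nil _ le_rfl, lcs_nil]
      simp
  rw [density, e1, e2, e3, e4]
  omega

end Aux

/-- (i,j) is a step index of Diff iff k = nextmatch(i,σ,B) < ∞, every
row i+1,…,k of K□ contains a pivotal point, and j is the maximum column index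
among all pivotal points of K□ in rows i+1,…,k. -/
theorem stmt_9 {α : Type*} (A B : List α) (m n : ℕ)
    (hA : A.length = m) (hB : B.length = n) (σ : α)
    (hRow : ∀ i, 1 ≤ i → i ≤ n → ∀ j₁ j₂, 1 ≤ j₁ → j₁ ≤ n → 1 ≤ j₂ → j₂ ≤ n →
      density (Kmat A B) i j₁ ≠ 0 → density (Kmat A B) i j₂ ≠ 0 → j₁ = j₂)
    (hVal : ∀ i, 1 ≤ i → i ≤ n → ∀ j, 1 ≤ j → j ≤ n →
      density (Kmat A B) i j ≠ 0 → density (Kmat A B) i j = 1) :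
    ∀ i j : ℕ, i < j → j ≤ n →
      ((Kmat (σ :: A) B i j - Kmat A B i j) ≠
          (Kmat (σ :: A) B i (j - 1) - Kmat A B i (j - 1)) ↔
        ∃ k : ℕ, nextmatch i σ B = (k : ℕ∞) ∧
          (∀ i', i + 1 ≤ i' → i' ≤ k →
            ∃ j', 1 ≤ j' ∧ j' ≤ n ∧ density (Kmat A B) i' j' ≠ 0) ∧
          (∃ i', i + 1 ≤ i' ∧ i' ≤ k ∧ density (Kmat A B) i' j ≠ 0) ∧
          (∀ i' j', i + 1 ≤ i' → i' ≤ k → 1 ≤ j' → j' ≤ n →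
            density (Kmat A B) i' j' ≠ 0 → j' ≤ j)) := by
  classical
  subst hB
  intro i j hij hjn
  by_cases hT : ∃ k', i < k' ∧ k' ≤ B.length ∧ B[k'-1]? = some σ
  · -- there is a match after i
    have hTne : Set.Nonempty {k' : ℕ | i < k' ∧ k' ≤ B.length ∧ B[k'-1]? = some σ} := hT
    obtain ⟨hik, hkn, hmatch⟩ := Nat.sInf_mem hTne
    set k := sInf {k' : ℕ | i < k' ∧ k' ≤ B.length ∧ B[k'-1]? = some σ} with hkdef
    have hle : ∀ k', i < k' → k' ≤ B.length → B[k'-1]? = some σ → k ≤ k' :=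
      fun k' a b c => Nat.sInf_le ⟨a, b, c⟩
    have hmin : ∀ p, i < p → p < k → B[p-1]? ≠ some σ := by
      intro p h1 h2 hm
      have := hle p h1 (by omega) hm
      omega
    have hnm : nextmatch i σ B = (k : ℕ∞) := nextmatch_eq_coe hik hkn hmatch hle
    -- the d function characterization
    have dchar : ∀ j', i ≤ j' → j' ≤ B.length →
        Kmat A B i j' - Kmat A B k j' = (k : ℤ) - (i : ℤ) -
          ((Finset.Ioc i k).filter
            (fun i'' => ∃ j'' ∈ Finset.Ioc i j', density (Kmat A B) i'' j'' ≠ 0)).card := by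
      intro j' hij' hj'n
      have hsum := density_sum (Kmat A B) (le_of_lt hik) hij'
      have hrows : ∀ i'' ∈ Finset.Ioc i k,
          ∑ j'' ∈ Finset.Ioc i j', density (Kmat A B) i'' j''
            = if (∃ j'' ∈ Finset.Ioc i j', density (Kmat A B) i'' j'' ≠ 0)
              then (1:ℤ) else 0 := by
        intro i'' hi''
        have h' := Finset.mem_Ioc.1 hi''
        by_cases hex : ∃ j'' ∈ Finset.Ioc i j', density (Kmat A B) i'' j'' ≠ 0
        · rw [if_pos hex]
          exact row_sum_eq_one hRow hVal (by omega) (by omega) hj'n hex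
        · rw [if_neg hex]
          exact row_sum_eq_zero hex
      rw [Finset.sum_congr rfl hrows, Finset.sum_boole, Kmat_diag,
        Kmat_lower A B hik] at hsum
      linarith [hsum]
    have dnonneg : ∀ j', i ≤ j' → j' ≤ B.length →
        0 ≤ Kmat A B i j' - Kmat A B k j' := by
      intro j' h1 h2
      rw [dchar j' h1 h2]
      have h3 := Finset.card_filter_le (Finset.Ioc i k)
        (fun i'' => ∃ j'' ∈ Finset.Ioc i j', density (Kmat A B) i'' j'' ≠ 0)
      rw [Nat.card_Ioc] at h3
      omega
    have dzero_iff : ∀ j', i ≤ j' → j' ≤ B.length →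
        (Kmat A B i j' - Kmat A B k j' = 0 ↔
          ∀ i'' ∈ Finset.Ioc i k, ∃ j'' ∈ Finset.Ioc i j',
            density (Kmat A B) i'' j'' ≠ 0) := by
      intro j' h1 h2
      rw [dchar j' h1 h2]
      constructor
      · intro h0
        have hcard : ((Finset.Ioc i k).filter
            (fun i'' => ∃ j'' ∈ Finset.Ioc i j', density (Kmat A B) i'' j'' ≠ 0)).card
            = (Finset.Ioc i k).card := by
          rw [Nat.card_Ioc]; omega
        have heq := Finset.eq_of_subset_of_card_le (Finset.filter_subset _ _) hcard.ge
        exact fun i'' hi'' => Finset.filter_eq_self.1 heq i'' hi''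
      · intro hall
        rw [Finset.filter_eq_self.2 hall, Nat.card_Ioc]
        omega
    have diffval : ∀ j', k ≤ j' → j' ≤ B.length →
        Kmat (σ :: A) B i j' - Kmat A B i j'
          = if Kmat A B i j' - Kmat A B k j' = 0 then 1 else 0 := by
      intro j' h1 h2
      rw [Kmat_cons_match hik h1 hkn hmatch hmin]
      have hnn := dnonneg j' (by omega) h2
      by_cases h0 : Kmat A B i j' - Kmat A B k j' = 0
      · rw [if_pos h0, max_eq_right (by omega : Kmat A B i j' ≤ 1 + Kmat A B k j')]
        omega
      · rw [if_neg h0, max_eq_left (by omega : 1 + Kmat A B k j' ≤ Kmat A B i j')]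
        omega
    by_cases hjk : j < k
    · -- j before the first match: no step, RHS false
      have e1 : Kmat (σ :: A) B i j = Kmat A B i j :=
        Kmat_cons_no_match (le_of_lt hij) (fun p a b => hmin p a (by omega))
      have e2 : Kmat (σ :: A) B i (j-1) = Kmat A B i (j-1) :=
        Kmat_cons_no_match (by omega) (fun p a b => hmin p a (by omega))
      rw [e1, e2, sub_self, sub_self]
      constructor
      · intro h; exact absurd rfl h
      · rintro ⟨k', hk', hall, ⟨i₀, hi₀1, hi₀2, hi₀3⟩, hmax⟩
        exfalso
        rw [hnm] at hk'
        have hkk' : k = k' := by exact_mod_cast hk'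
        rw [← hkk'] at hall hmax
        obtain ⟨j₀, hj₀1, hj₀2, hj₀3⟩ := hall k (by omega) le_rfl
        have hge := density_ne_col_ge (by omega) hj₀1 hj₀3
        have hle' := hmax k j₀ (by omega) le_rfl hj₀1 hj₀2 hj₀3
        omega
    · push_neg at hjk
      have e1 := diffval j hjk hjn
      by_cases hjk2 : j = k
      · -- j is exactly the first match position
        have e2 : Kmat (σ :: A) B i (j-1) = Kmat A B i (j-1) :=
          Kmat_cons_no_match (by omega) (fun p a b => hmin p a (by omega))
        rw [e1, e2, sub_self]
        constructor
        · intro hstep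
          have h0 : Kmat A B i j - Kmat A B k j = 0 := by
            by_contra hc; rw [if_neg hc] at hstep; exact hstep rfl
          have hcover := (dzero_iff j (by omega) hjn).1 h0
          refine ⟨k, hnm, ?_, ?_, ?_⟩
          · intro i' ha hb
            obtain ⟨j₀, hj₀m, hj₀⟩ := hcover i' (Finset.mem_Ioc.2 ⟨by omega, hb⟩)
            have h' := Finset.mem_Ioc.1 hj₀m
            exact ⟨j₀, by omega, by omega, hj₀⟩
          · obtain ⟨j₀, hj₀m, hj₀⟩ := hcover k (Finset.mem_Ioc.2 ⟨hik, le_rfl⟩)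
            have h' := Finset.mem_Ioc.1 hj₀m
            have hge := density_ne_col_ge (by omega) (by omega) hj₀
            have hj₀j : j₀ = j := by omega
            exact ⟨k, by omega, le_rfl, hj₀j ▸ hj₀⟩
          · intro i' j₁ ha hb hc hd hne
            obtain ⟨j₀, hj₀m, hj₀⟩ := hcover i' (Finset.mem_Ioc.2 ⟨by omega, hb⟩)
            have h' := Finset.mem_Ioc.1 hj₀m
            have := hRow i' (by omega) (by omega) j₁ j₀ hc hd (by omega) (by omega) hne hj₀
            omega
        · rintro ⟨k', hk', hall, hex, hmax⟩
          rw [hnm] at hk'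
          have hkk' : k = k' := by exact_mod_cast hk'
          rw [← hkk'] at hall hex hmax
          have h0 : Kmat A B i j - Kmat A B k j = 0 := by
            apply (dzero_iff j (by omega) hjn).2
            intro i' hi'
            have h' := Finset.mem_Ioc.1 hi'
            obtain ⟨j₀, ha, hb, hc⟩ := hall i' (by omega) h'.2
            have hge := density_ne_col_ge (by omega) ha hc
            refine ⟨j₀, Finset.mem_Ioc.2 ⟨by omega, ?_⟩, hc⟩
            exact hmax i' j₀ (by omega) h'.2 ha hb hc
          rw [if_pos h0]
          exact one_ne_zero
      · -- k < j
        have e2 := diffval (j-1) (by omega) (by omega)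
        rw [e1, e2]
        constructor
        · intro hstep
          by_cases h0 : Kmat A B i j - Kmat A B k j = 0
          · have hcover := (dzero_iff j (by omega) hjn).1 h0
            have h0' : Kmat A B i (j-1) - Kmat A B k (j-1) ≠ 0 := by
              intro hc
              rw [if_pos h0, if_pos hc] at hstep
              exact hstep rfl
            have hncover : ¬ ∀ i'' ∈ Finset.Ioc i k, ∃ j'' ∈ Finset.Ioc i (j-1),
                density (Kmat A B) i'' j'' ≠ 0 :=
              fun hcov => h0' ((dzero_iff (j-1) (by omega) (by omega)).2 hcov)
            obtain ⟨i₀, hi₀m, hi₀no⟩ : ∃ i' ∈ Finset.Ioc i k,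
                ¬ ∃ j'' ∈ Finset.Ioc i (j-1), density (Kmat A B) i' j'' ≠ 0 := by
              by_contra hcon
              push_neg at hcon
              exact hncover hcon
            obtain ⟨j₀, hj₀m, hj₀⟩ := hcover i₀ hi₀m
            have h' := Finset.mem_Ioc.1 hj₀m
            have hj₀j : j₀ = j := by
              by_contra hne
              exact hi₀no ⟨j₀, Finset.mem_Ioc.2 ⟨h'.1, by omega⟩, hj₀⟩
            have hi₀' := Finset.mem_Ioc.1 hi₀m
            refine ⟨k, hnm, ?_, ⟨i₀, by omega, hi₀'.2, hj₀j ▸ hj₀⟩, ?_⟩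
            · intro i' ha hb
              obtain ⟨j₁, hm, hne⟩ := hcover i' (Finset.mem_Ioc.2 ⟨by omega, hb⟩)
              have h'' := Finset.mem_Ioc.1 hm
              exact ⟨j₁, by omega, by omega, hne⟩
            · intro i' j₁ ha hb hc hd hne
              obtain ⟨j₂, hm, hne₂⟩ := hcover i' (Finset.mem_Ioc.2 ⟨by omega, hb⟩)
              have h'' := Finset.mem_Ioc.1 hm
              have := hRow i' (by omega) (by omega) j₁ j₂ hc hd (by omega) (by omega) hne hne₂
              omega
          · exfalso
            have h0' : Kmat A B i (j-1) - Kmat A B k (j-1) ≠ 0 := by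
              intro hc
              apply h0
              apply (dzero_iff j (by omega) hjn).2
              intro i' hi'
              obtain ⟨j₀, hm, hne⟩ := (dzero_iff (j-1) (by omega) (by omega)).1 hc i' hi'
              have h' := Finset.mem_Ioc.1 hm
              exact ⟨j₀, Finset.mem_Ioc.2 ⟨h'.1, by omega⟩, hne⟩
            rw [if_neg h0, if_neg h0'] at hstep
            exact hstep rfl
        · rintro ⟨k', hk', hall, hex, hmax⟩
          rw [hnm] at hk'
          have hkk' : k = k' := by exact_mod_cast hk'
          rw [← hkk'] at hall hex hmax
          have h0 : Kmat A B i j - Kmat A B k j = 0 := by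
            apply (dzero_iff j (by omega) hjn).2
            intro i' hi'
            have h' := Finset.mem_Ioc.1 hi'
            obtain ⟨j₀, ha, hb, hc⟩ := hall i' (by omega) h'.2
            have hge := density_ne_col_ge (by omega) ha hc
            refine ⟨j₀, Finset.mem_Ioc.2 ⟨by omega, ?_⟩, hc⟩
            exact hmax i' j₀ (by omega) h'.2 ha hb hc
          have h0' : Kmat A B i (j-1) - Kmat A B k (j-1) ≠ 0 := by
            intro hc
            obtain ⟨i₀, ha, hb, hc₀⟩ := hex
            obtain ⟨j₂, hm, hne₂⟩ := (dzero_iff (j-1) (by omega) (by omega)).1 hc i₀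
              (Finset.mem_Ioc.2 ⟨by omega, hb⟩)
            have h'' := Finset.mem_Ioc.1 hm
            have := hRow i₀ (by omega) (by omega) j j₂ (by omega) hjn (by omega)
              (by omega) hc₀ hne₂
            omega
          rw [if_pos h0, if_neg h0']
          norm_num
  · -- no match after i at all
    push_neg at hT
    have hnm := nextmatch_eq_top hT
    have e1 : Kmat (σ :: A) B i j = Kmat A B i j :=
      Kmat_cons_no_match (le_of_lt hij) (fun p a b => hT p a (le_trans b hjn))
    have e2 : Kmat (σ :: A) B i (j-1) = Kmat A B i (j-1) :=
      Kmat_cons_no_match (by omega) (fun p a b => hT p a (by omega))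
    rw [e1, e2, sub_self, sub_self]
    constructor
    · intro h; exact absurd rfl h
    · rintro ⟨k', hk', -, -, -⟩
      rw [hnm] at hk'
      exact absurd hk'.symm (by simp)
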